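/- arXiv:2004.08332 — 4 statements merged into one kernel-verified Lean document; each statement's English description precedes it below -/
import Mathlib

section
/- Let L be an N×N complex matrix with Schur decomposition L = S T S*, where S is unitary and T is upper triangular with diagonal entries λ₁, …, λ_N (the eigenvalues of L). Then for any n×n complex matrix H and scalar c, det(I_{nN} + (I_N ⊗ H)·(c(L ⊗ I_n))) = ∏_{p=1}^{N} det(I_n + c·λ_p·H). -/
open Matrix
open scoped Kronecker

/-- Schur-decomposition based determinant factorization for the multi-agent
loop transfer function: `det(I + (I_N ⊗ H)·(c (L ⊗ I_n))) = ∏ₚ det(I + c λₚ H)`,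
where the `λₚ = T p p` are the diagonal entries of the upper-triangular Schur factor. -/
theorem stmt0 (N n : ℕ) (L S T : Matrix (Fin N) (Fin N) ℂ)
    (hS : S ∈ Matrix.unitaryGroup (Fin N) ℂ)
    (hT : T.BlockTriangular (id : Fin N → Fin N))
    (hSchur : L = S * T * Sᴴ)
    (H : Matrix (Fin n) (Fin n) ℂ) (c : ℂ) :
    ((1 : Matrix (Fin N × Fin n) (Fin N × Fin n) ℂ) +
        ((1 : Matrix (Fin N) (Fin N) ℂ) ⊗ₖ H) *
          (c • (L ⊗ₖ (1 : Matrix (Fin n) (Fin n) ℂ)))).det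
      = ∏ p : Fin N, ((1 : Matrix (Fin n) (Fin n) ℂ) + (c * T p p) • H).det := by
  have hSS : S * Sᴴ = 1 := by
    simpa [Matrix.star_eq_conjTranspose] using Matrix.mem_unitaryGroup_iff.mp hS
  set M : Matrix (Fin N × Fin n) (Fin N × Fin n) ℂ :=
    (1 : Matrix (Fin N × Fin n) (Fin N × Fin n) ℂ) + c • (T ⊗ₖ H) with hM
  -- Step 1: rewrite the matrix as a conjugation of M by S ⊗ₖ 1.
  have h1 : ((1 : Matrix (Fin N) (Fin N) ℂ) ⊗ₖ H) *
      (c • (L ⊗ₖ (1 : Matrix (Fin n) (Fin n) ℂ))) = c • (L ⊗ₖ H) := by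
    rw [mul_smul_comm, ← Matrix.mul_kronecker_mul, one_mul, mul_one]
  have h2 : L ⊗ₖ H =
      (S ⊗ₖ (1 : Matrix (Fin n) (Fin n) ℂ)) * (T ⊗ₖ H) *
        (Sᴴ ⊗ₖ (1 : Matrix (Fin n) (Fin n) ℂ)) := by
    rw [← Matrix.mul_kronecker_mul, ← Matrix.mul_kronecker_mul, hSchur]
    simp
  have hSS1 : (S ⊗ₖ (1 : Matrix (Fin n) (Fin n) ℂ)) *
      (Sᴴ ⊗ₖ (1 : Matrix (Fin n) (Fin n) ℂ)) = 1 := by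
    rw [← Matrix.mul_kronecker_mul, hSS, mul_one, Matrix.one_kronecker_one]
  have key : (1 : Matrix (Fin N × Fin n) (Fin N × Fin n) ℂ) +
      ((1 : Matrix (Fin N) (Fin N) ℂ) ⊗ₖ H) *
        (c • (L ⊗ₖ (1 : Matrix (Fin n) (Fin n) ℂ)))
      = (S ⊗ₖ (1 : Matrix (Fin n) (Fin n) ℂ)) * M *
          (Sᴴ ⊗ₖ (1 : Matrix (Fin n) (Fin n) ℂ)) := by
    rw [h1, h2, hM]
    rw [mul_add, add_mul, mul_one, hSS1]
    rw [mul_smul_comm, smul_mul_assoc, mul_assoc]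
  rw [key, Matrix.det_mul, Matrix.det_mul]
  have hdet1 : (S ⊗ₖ (1 : Matrix (Fin n) (Fin n) ℂ)).det *
      (Sᴴ ⊗ₖ (1 : Matrix (Fin n) (Fin n) ℂ)).det = 1 := by
    rw [← Matrix.det_mul, hSS1, Matrix.det_one]
  -- Step 2: M is block triangular w.r.t. Prod.fst
  have hMbt : M.BlockTriangular (Prod.fst) := by
    intro a b hab
    have hne : a ≠ b := by
      intro h; rw [h] at hab; exact lt_irrefl _ hab
    have hT0 : T a.1 b.1 = 0 := hT hab
    simp [hM, Matrix.one_apply, hne, Matrix.kroneckerMap_apply, hT0]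
  have hblock : ∀ p : Fin N, (M.toSquareBlock Prod.fst p).det =
      ((1 : Matrix (Fin n) (Fin n) ℂ) + (c * T p p) • H).det := by
    intro p
    let e : Fin n ≃ {a : Fin N × Fin n // a.1 = p} :=
      { toFun := fun i => ⟨(p, i), rfl⟩
        invFun := fun a => a.1.2
        left_inv := fun i => rfl
        right_inv := fun a => Subtype.ext (Prod.ext a.2.symm rfl) }
    have hsub : (M.toSquareBlock Prod.fst p).submatrix e e =
        (1 : Matrix (Fin n) (Fin n) ℂ) + (c * T p p) • H := by
      ext i j
      simp [Matrix.toSquareBlock_def, hM, e, Matrix.one_apply, Prod.ext_iff,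
        Matrix.kroneckerMap_apply, mul_assoc]
    rw [← Matrix.det_submatrix_equiv_self e, hsub]
  calc (S ⊗ₖ (1 : Matrix (Fin n) (Fin n) ℂ)).det * M.det *
        (Sᴴ ⊗ₖ (1 : Matrix (Fin n) (Fin n) ℂ)).det
      = (S ⊗ₖ (1 : Matrix (Fin n) (Fin n) ℂ)).det *
        (Sᴴ ⊗ₖ (1 : Matrix (Fin n) (Fin n) ℂ)).det * M.det := by ring
    _ = M.det := by rw [hdet1, one_mul]
    _ = _ := by
        rw [hMbt.det_fintype]
        exact Finset.prod_congr rfl fun p _ => hblock p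
end

section
/- Let G be an n×n complex matrix whose largest singular value satisfies σ̄(G) ≥ 1 and whose smallest singular value satisfies σ_min(G) ≤ 1. Then there exists a unit vector z ∈ ℂⁿ with ‖G·z‖ = 1, and consequently there exists a unitary matrix Δ such that det(I + G·Δ) = 0. -/
open Matrix

lemma toEuclideanLin_mul_aux (n : ℕ) (A B : Matrix (Fin n) (Fin n) ℂ) :
    Matrix.toEuclideanLin (A * B) =
      (Matrix.toEuclideanLin A).comp (Matrix.toEuclideanLin B) := by
  ext x
  simp [Matrix.toEuclideanLin_apply, Matrix.mulVec_mulVec]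

lemma toEuclideanLin_one_aux (n : ℕ) :
    Matrix.toEuclideanLin (1 : Matrix (Fin n) (Fin n) ℂ) = LinearMap.id := by
  ext x
  simp [Matrix.toEuclideanLin_apply]

/-- If the largest singular value of `G` is `≥ 1` and the smallest is `≤ 1`
(characterized as sup/inf of `‖Gz‖` over unit vectors `z`), then there is a unit
vector `z` with `‖Gz‖ = 1`, and consequently a unitary `Δ` with `det(I + GΔ) = 0`. -/
theorem stmt3 (n : ℕ) (hn : 0 < n) (G : Matrix (Fin n) (Fin n) ℂ)
    (hmax : 1 ≤ sSup {r : ℝ | ∃ z : EuclideanSpace ℂ (Fin n), ‖z‖ = 1 ∧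
        r = ‖Matrix.toEuclideanLin G z‖})
    (hmin : sInf {r : ℝ | ∃ z : EuclideanSpace ℂ (Fin n), ‖z‖ = 1 ∧
        r = ‖Matrix.toEuclideanLin G z‖} ≤ 1) :
    (∃ z : EuclideanSpace ℂ (Fin n), ‖z‖ = 1 ∧ ‖Matrix.toEuclideanLin G z‖ = 1) ∧
    ∃ Δ ∈ Matrix.unitaryGroup (Fin n) ℂ, (1 + G * Δ).det = 0 := by
  classical
  set E := EuclideanSpace ℂ (Fin n)
  set f : E → ℝ := fun z => ‖Matrix.toEuclideanLin G z‖ with hf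
  set S : Set ℝ := {r : ℝ | ∃ z : E, ‖z‖ = 1 ∧ r = ‖Matrix.toEuclideanLin G z‖} with hS
  have hSimg : S = f '' Metric.sphere (0 : E) 1 := by
    ext r
    simp only [hS, Set.mem_setOf_eq, Set.mem_image, mem_sphere_zero_iff_norm, hf]
    constructor
    · rintro ⟨z, hz, rfl⟩; exact ⟨z, hz, rfl⟩
    · rintro ⟨z, hz, rfl⟩; exact ⟨z, hz, rfl⟩
  have hcont : Continuous f :=
    continuous_norm.comp (Matrix.toEuclideanLin G).continuous_of_finiteDimensional
  have hrank : 1 < Module.rank ℝ E := by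
    have h2 : Module.finrank ℂ E = n := by
      show Module.finrank ℂ (EuclideanSpace ℂ (Fin n)) = n
      exact finrank_euclideanSpace_fin
    have hfr : Module.finrank ℝ E = 2 * n := by
      rw [← Module.finrank_mul_finrank ℝ ℂ E, h2, Complex.finrank_real_complex]
    have h1 : 1 < Module.finrank ℝ E := by omega
    rw [← Module.finrank_eq_rank]
    exact_mod_cast h1
  have hconn : IsConnected (Metric.sphere (0 : E) 1) :=
    isConnected_sphere hrank 0 zero_le_one
  have hScompact : IsCompact S := by
    rw [hSimg]
    exact (isCompact_sphere (0 : E) 1).image hcont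
  have hSconn : IsConnected S := by
    rw [hSimg]
    exact hconn.image f hcont.continuousOn
  have hSne : S.Nonempty := hSconn.nonempty
  have hsup : sSup S ∈ S := hScompact.sSup_mem hSne
  have hinf : sInf S ∈ S := hScompact.sInf_mem hSne
  have h1S : (1 : ℝ) ∈ S :=
    hSconn.isPreconnected.ordConnected.out hinf hsup ⟨hmin, hmax⟩
  obtain ⟨z, hz1, hz2⟩ := h1S
  refine ⟨⟨z, hz1, hz2.symm⟩, ?_⟩
  -- construct the unitary
  set v : E := -(Matrix.toEuclideanLin G z) with hv
  have hvnorm : ‖v‖ = 1 := by rw [hv, norm_neg]; exact hz2.symm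
  have hznorm : ‖z‖ = 1 := hz1
  have hcard : Module.finrank ℂ E = Fintype.card (Fin n) := by
    show Module.finrank ℂ (EuclideanSpace ℂ (Fin n)) = Fintype.card (Fin n)
    simp [finrank_euclideanSpace_fin]
  obtain ⟨i0⟩ : Nonempty (Fin n) := ⟨⟨0, hn⟩⟩
  have horth : ∀ w : E, ‖w‖ = 1 →
      Orthonormal ℂ (({i0} : Set (Fin n)).restrict (fun _ : Fin n => w)) := by
    intro w hw
    constructor
    · intro i; exact hw
    · intro i j hij
      exact absurd (Subsingleton.elim i j) hij
  obtain ⟨b, hb⟩ := (horth v hvnorm).exists_orthonormalBasis_extension_of_card_eq hcard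
  obtain ⟨c, hc⟩ := (horth z hznorm).exists_orthonormalBasis_extension_of_card_eq hcard
  have hbv : b i0 = v := hb i0 rfl
  have hcz : c i0 = z := hc i0 rfl
  set e : E ≃ₗᵢ[ℂ] E := b.repr.trans c.repr.symm with he
  have hev : e v = z := by
    rw [← hbv, ← hcz, he]
    simp only [LinearIsometryEquiv.trans_apply, OrthonormalBasis.repr_self,
      OrthonormalBasis.repr_symm_single]
  set Δ : Matrix (Fin n) (Fin n) ℂ :=
    Matrix.toEuclideanLin.symm (e.toLinearEquiv : E →ₗ[ℂ] E) with hΔ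
  have hΔlin : Matrix.toEuclideanLin Δ = (e.toLinearEquiv : E →ₗ[ℂ] E) := by
    rw [hΔ]; exact Matrix.toEuclideanLin.apply_symm_apply _
  have hmem : Δ ∈ Matrix.unitaryGroup (Fin n) ℂ := by
    rw [Matrix.mem_unitaryGroup_iff']
    have : Matrix.toEuclideanLin (star Δ * Δ) =
        Matrix.toEuclideanLin (1 : Matrix (Fin n) (Fin n) ℂ) := by
      rw [toEuclideanLin_mul_aux, toEuclideanLin_one_aux, Matrix.star_eq_conjTranspose,
        Matrix.toEuclideanLin_conjTranspose_eq_adjoint, hΔlin]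
      apply LinearMap.ext
      intro x
      apply ext_inner_left ℂ
      intro y
      rw [LinearMap.comp_apply, LinearMap.adjoint_inner_right]
      simpa using e.inner_map_map y x
    exact Matrix.toEuclideanLin.injective this
  refine ⟨Δ, hmem, ?_⟩
  rw [← Matrix.exists_mulVec_eq_zero_iff]
  refine ⟨(WithLp.equiv 2 (Fin n → ℂ)) v, ?_, ?_⟩
  · intro h
    have : v = 0 := by
      apply (WithLp.equiv 2 (Fin n → ℂ)).injective
      simpa using h
    rw [this, norm_zero] at hvnorm
    norm_num at hvnorm
  · have key : Matrix.toEuclideanLin (1 + G * Δ) v = 0 := by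
      rw [map_add, toEuclideanLin_mul_aux, toEuclideanLin_one_aux]
      simp only [LinearMap.add_apply, LinearMap.id_apply, LinearMap.comp_apply, hΔlin]
      have : (e.toLinearEquiv : E →ₗ[ℂ] E) v = z := hev
      rw [this, hv]
      exact neg_add_cancel _
    have := congrArg (WithLp.equiv 2 (Fin n → ℂ)) key
    exact this
end

section
/- Let v, z ∈ ℂⁿ be nonzero vectors with v*z real and positive. Then there exists a positive definite Hermitian matrix R with R·v = z. -/
open Matrix
open scoped ComplexOrder

private lemma vecMulVec_mulVec' {n : ℕ} (w u x : Fin n → ℂ) :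
    Matrix.vecMulVec w u *ᵥ x = (u ⬝ᵥ x) • w := by
  ext i
  simp only [Matrix.vecMulVec_apply, Matrix.mulVec, dotProduct, Pi.smul_apply,
    smul_eq_mul, Finset.sum_mul]
  exact Finset.sum_congr rfl fun j _ => by ring

/-- If `v, z ∈ ℂⁿ` have `v*z` real and positive, there exists a positive definite
Hermitian matrix `R` with `Rv = z`. -/
theorem stmt8 (n : ℕ) (v z : EuclideanSpace ℂ (Fin n))
    (him : (inner ℂ v z : ℂ).im = 0) (hre : 0 < (inner ℂ v z : ℂ).re) :
    ∃ R : Matrix (Fin n) (Fin n) ℂ, R.PosDef ∧ Matrix.toEuclideanLin R v = z := by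
  classical
  set vf : Fin n → ℂ := (WithLp.equiv 2 (Fin n → ℂ)) v with hvf
  set zf : Fin n → ℂ := (WithLp.equiv 2 (Fin n → ℂ)) z with hzf
  set c : ℂ := inner ℂ v z with hc
  have hcd : c = star vf ⬝ᵥ zf := (EuclideanSpace.inner_eq_star_dotProduct v z).trans (dotProduct_comm _ _)
  have hcre : c = ((c.re : ℝ) : ℂ) := by
    apply Complex.ext <;> simp [him]
  have hcpos : (0 : ℂ) < c := by
    rw [hcre]; exact_mod_cast hre
  have hc0 : c ≠ 0 := ne_of_gt hcpos
  have hcstar : star c = c := by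
    rw [hcre]; simp
  have hv0 : vf ≠ 0 := by
    intro h
    have : c = 0 := by rw [hcd, h]; simp
    exact hc0 this
  set b : ℂ := star vf ⬝ᵥ vf with hb
  have hbpos : (0 : ℂ) < b := Matrix.dotProduct_star_self_pos_iff.mpr hv0
  have hb0 : b ≠ 0 := ne_of_gt hbpos
  have hbstar : star b = b := by
    rw [hb]; exact (Matrix.star_dotProduct vf vf).symm
  have hbre : b = ((b.re : ℝ) : ℂ) := by
    apply Complex.ext
    · simp
    · have := congrArg Complex.im hbstar
      simp at this
      simp only [Complex.ofReal_im]
      linarith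
  -- star z ⬝ᵥ vf = c
  have hzv : star zf ⬝ᵥ vf = c := by
    rw [Matrix.star_dotProduct, ← hcd, hcstar]
  set R : Matrix (Fin n) (Fin n) ℂ :=
    c⁻¹ • Matrix.vecMulVec zf (star zf) + 1 - b⁻¹ • Matrix.vecMulVec vf (star vf) with hR
  have hmul : ∀ x : Fin n → ℂ,
      R *ᵥ x = (c⁻¹ * (star zf ⬝ᵥ x)) • zf + x - (b⁻¹ * (star vf ⬝ᵥ x)) • vf := by
    intro x
    rw [hR, Matrix.sub_mulVec, Matrix.add_mulVec, Matrix.smul_mulVec,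
      Matrix.smul_mulVec, vecMulVec_mulVec', vecMulVec_mulVec', Matrix.one_mulVec,
      smul_smul, smul_smul]
  have hherm : R.IsHermitian := by
    rw [Matrix.IsHermitian]
    ext i j
    simp only [hR, Matrix.conjTranspose_apply, Matrix.sub_apply, Matrix.add_apply,
      Matrix.smul_apply, Matrix.vecMulVec_apply, Matrix.one_apply, Pi.star_apply,
      star_sub, star_add, star_mul', star_smul, smul_eq_mul, star_inv₀, hcstar, hbstar,
      star_star]
    by_cases h : i = j <;> simp [h, eq_comm] <;> ring
  refine ⟨R, Matrix.PosDef.of_dotProduct_mulVec_pos hherm ?_, ?_⟩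
  · intro x hx
    set p : ℂ := star zf ⬝ᵥ x with hp
    set q : ℂ := star vf ⬝ᵥ x with hq
    set w : Fin n → ℂ := x - (b⁻¹ * q) • vf with hw
    have hxz : star x ⬝ᵥ zf = star p := Matrix.star_dotProduct x zf
    have hxv : star x ⬝ᵥ vf = star q := Matrix.star_dotProduct x vf
    have key : star x ⬝ᵥ (R *ᵥ x) = c⁻¹ * (p * star p) + star w ⬝ᵥ w := by
      rw [hmul x]
      rw [hw]
      simp only [dotProduct_add, dotProduct_sub, dotProduct_smul,
        star_sub, star_smul, sub_dotProduct, smul_dotProduct,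
        smul_eq_mul, star_mul', star_inv₀, hbstar, hxz, hxv, ← hq, ← hb]
      field_simp
      ring
    rw [key]
    have term1_nonneg : 0 ≤ c⁻¹ * (p * star p) := by
      have : c⁻¹ * (p * star p) = (((c.re)⁻¹ * Complex.normSq p : ℝ) : ℂ) := by
        rw [RCLike.star_def, Complex.mul_conj]
        rw [hcre]
        push_cast
        simp [Complex.ofReal_re]
      rw [this]
      rw [Complex.zero_le_real]
      exact mul_nonneg (inv_nonneg.mpr hre.le) (Complex.normSq_nonneg p)
    by_cases hw0 : w = 0
    · -- x is a multiple of v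
      have hq0 : q ≠ 0 := by
        intro h
        apply hx
        have := hw0
        rw [hw, h, mul_zero, zero_smul, sub_zero] at this
        exact this
      have hxval : x = (b⁻¹ * q) • vf := by
        have := hw0
        rw [hw, sub_eq_zero] at this
        exact this
      have hpval : p = b⁻¹ * q * c := by
        rw [hp, hxval, dotProduct_smul, smul_eq_mul, hzv]
      have hp0 : p ≠ 0 := by
        rw [hpval]
        exact mul_ne_zero (mul_ne_zero (inv_ne_zero hb0) hq0) hc0
      have term1_pos : 0 < c⁻¹ * (p * star p) := by
        have : c⁻¹ * (p * star p) = (((c.re)⁻¹ * Complex.normSq p : ℝ) : ℂ) := by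
          rw [RCLike.star_def, Complex.mul_conj]
          rw [hcre]
          push_cast
          simp [Complex.ofReal_re]
        rw [this, Complex.zero_lt_real]
        have h1 : 0 < (c.re)⁻¹ := inv_pos.mpr hre
        have h2 : 0 < Complex.normSq p := Complex.normSq_pos.mpr hp0
        exact mul_pos h1 h2
      have : star w ⬝ᵥ w = 0 := by rw [hw0]; simp
      rw [this, add_zero]
      exact term1_pos
    · have term2_pos : 0 < star w ⬝ᵥ w := Matrix.dotProduct_star_self_pos_iff.mpr hw0
      exact add_pos_of_nonneg_of_pos term1_nonneg term2_pos
  · -- R v = z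
    apply (WithLp.equiv 2 (Fin n → ℂ)).injective
    change R *ᵥ vf = zf
    rw [hmul vf, ← hb, hzv]
    rw [inv_mul_cancel₀ hc0, inv_mul_cancel₀ hb0, one_smul, one_smul]
    simp [hzf]
end

section
/- Let v, z ∈ ℂⁿ with v*z real and positive, and let R be a positive definite Hermitian matrix with Rv = z. If the eigenvalues of R all lie in [e^{−g}, e^{g}] for g ≥ 0, then (v*v + z*z)/(2 v*z) ≤ cosh(g). Equivalently, the minimal gain g of a positive definite Hermitian matrix mapping v to z satisfies cosh(g) ≥ (‖v‖² + ‖z‖²)/(2 v*z). -/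
open Matrix
open scoped ComplexOrder

/-- Gain-margin bound: if `v*z` is real and positive, `R` is positive definite
Hermitian with `Rv = z`, and all eigenvalues of `R` lie in `[e^{−g}, e^{g}]`
(`g ≥ 0`), then `(‖v‖² + ‖z‖²)/(2 v*z) ≤ cosh g`. -/
theorem stmt18 (n : ℕ) (v z : Fin n → ℂ) (g : ℝ) (hg : 0 ≤ g)
    (him : (star v ⬝ᵥ z).im = 0) (hre : 0 < (star v ⬝ᵥ z).re)
    (R : Matrix (Fin n) (Fin n) ℂ) (hR : R.PosDef)
    (hmap : R.mulVec v = z)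
    (heig : ∀ i, hR.1.eigenvalues i ∈ Set.Icc (Real.exp (-g)) (Real.exp g)) :
    ((star v ⬝ᵥ v).re + (star z ⬝ᵥ z).re) / (2 * (star v ⬝ᵥ z).re) ≤ Real.cosh g := by
  have hH : R.IsHermitian := hR.1
  set U : Matrix (Fin n) (Fin n) ℂ := (hH.eigenvectorUnitary : Matrix (Fin n) (Fin n) ℂ)
  set lam : Fin n → ℝ := hH.eigenvalues with hlam
  set D : Matrix (Fin n) (Fin n) ℂ := diagonal (RCLike.ofReal ∘ lam) with hD
  have hspec : R = U * D * star U := hH.spectral_theorem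
  have hUU : star U * U = 1 := hH.eigenvectorUnitary.2.1
  have hUU' : U * star U = 1 := hH.eigenvectorUnitary.2.2
  -- the matrix M = 2cosh(g) R - 1 - R²
  set c : Fin n → ℂ := fun i => ((2 * Real.cosh g * lam i - 1 - lam i ^ 2 : ℝ) : ℂ) with hc
  set M : Matrix (Fin n) (Fin n) ℂ :=
    ((2 * Real.cosh g : ℝ) : ℂ) • R - 1 - R * R with hM
  have hMeq : M = U * diagonal c * star U := by
    rw [hM, hspec]
    have h2 : (U * D * star U) * (U * D * star U) = U * (D * D) * star U := by
      calc (U * D * star U) * (U * D * star U)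
          = U * D * (star U * U) * (D * star U) := by noncomm_ring
        _ = U * (D * D) * star U := by rw [hUU]; noncomm_ring
    rw [h2]
    have h1 : (1 : Matrix (Fin n) (Fin n) ℂ) = U * 1 * star U := by
      rw [mul_one, hUU']
    rw [h1]
    have hsm : (((2 * Real.cosh g : ℝ) : ℂ)) • (U * D * star U) =
        U * (((2 * Real.cosh g : ℝ) : ℂ) • D) * star U := by
      rw [Matrix.mul_smul, Matrix.smul_mul]
    rw [hsm]
    have hdiag : (((2 * Real.cosh g : ℝ) : ℂ)) • D - 1 - D * D = diagonal c := by
      ext i j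
      rcases eq_or_ne i j with rfl | h
      · simp [hD, hc, Matrix.diagonal_mul_diagonal, Matrix.one_apply_eq,
          Matrix.diagonal_apply_eq]
        push_cast
        ring
      · simp [hD, hc, Matrix.diagonal_mul_diagonal, Matrix.one_apply_ne h,
          Matrix.diagonal_apply_ne _ h]
    rw [← hdiag]
    noncomm_ring
  have hcnn : ∀ i, (0 : ℂ) ≤ c i := by
    intro i
    rw [hc]
    have h := heig i
    obtain ⟨h1, h2⟩ := h
    have hprod : Real.exp (-g) * Real.exp g = 1 := by
      rw [← Real.exp_add]; simp
    have hcosh : Real.cosh g = (Real.exp g + Real.exp (-g)) / 2 := by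
      rw [Real.cosh_eq]
    have hkey : 2 * Real.cosh g * lam i - 1 - lam i ^ 2
        = (Real.exp g - lam i) * (lam i - Real.exp (-g))
          + (Real.exp (-g) * Real.exp g - 1) := by
      rw [hcosh]; ring
    have : (0 : ℝ) ≤ 2 * Real.cosh g * lam i - 1 - lam i ^ 2 := by
      rw [hkey, hprod]
      have := mul_nonneg (sub_nonneg.2 h2) (sub_nonneg.2 h1)
      linarith
    simpa using (Complex.zero_le_real).2 this
  have hMpsd : M.PosSemidef := by
    rw [hMeq]
    have : (diagonal c).PosSemidef := Matrix.posSemidef_diagonal_iff.mpr hcnn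
    simpa [Matrix.star_eq_conjTranspose] using this.mul_mul_conjTranspose_same U
  have key : (0 : ℂ) ≤ ((2 * Real.cosh g : ℝ) : ℂ) * (star v ⬝ᵥ z)
      - star v ⬝ᵥ v - star z ⬝ᵥ z := by
    have h0 := hMpsd.dotProduct_mulVec_nonneg v
    have hMv : M *ᵥ v = ((2 * Real.cosh g : ℝ) : ℂ) • z - v - R *ᵥ z := by
      rw [hM, Matrix.sub_mulVec, Matrix.sub_mulVec, Matrix.smul_mulVec,
        Matrix.one_mulVec, ← Matrix.mulVec_mulVec, hmap]
    have hzz : star z ⬝ᵥ z = star v ⬝ᵥ (R *ᵥ z) := by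
      conv_lhs => rw [← hmap]
      rw [Matrix.star_mulVec, ← Matrix.dotProduct_mulVec, hH.eq, hmap]
    rw [hMv, dotProduct_sub, dotProduct_sub, dotProduct_smul] at h0
    rw [hzz]
    simpa [smul_eq_mul] using h0
  have hre' : 0 ≤ (2 * Real.cosh g) * (star v ⬝ᵥ z).re
      - (star v ⬝ᵥ v).re - (star z ⬝ᵥ z).re := by
    have := (Complex.le_def.mp key).1
    simpa [Complex.ofReal_mul, Complex.mul_re, him] using this
  rw [div_le_iff₀ (by positivity)]
  nlinarith [Real.cosh_pos (x := g)]
end
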